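/- Let n : ℕ and let Q : QuadraticForm ℚ (Fin n → ℚ) be the negative definite form with Q w = -(∑ j, (w j)^2) for all w. Let 𝒪 be a subring of CliffordAlgebra Q such that every element of 𝒪 is integral over ℤ and ι Q (Pi.single j 1) ∈ 𝒪 for every j : Fin n. If c : ℚ and w : Fin n → ℚ are such that algebraMap ℚ (CliffordAlgebra Q) c + ι Q w ∈ 𝒪, then there exist m₀ : ℤ and m : Fin n → ℤ with (m₀ : ℚ) = 2*c, (m j : ℚ) = 2 * w j for every j, and (4 : ℤ) ∣ m₀^2 + ∑ j, (m j)^2. -/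

import Mathlib

open CliffordAlgebra Polynomial


lemma aux_scalar_add_ι_eq_zero {R M : Type*} [Field R] [AddCommGroup M] [Module R M]
    (Q : QuadraticForm R M) [Invertible (2 : R)] (a : R) (u : M)
    (h : algebraMap R (CliffordAlgebra Q) a + CliffordAlgebra.ι Q u = 0) : a = 0 ∧ u = 0 := by
  have h2 := congrArg (CliffordAlgebra.equivExterior Q) h
  simp only [map_add, map_zero, CliffordAlgebra.equivExterior, changeFormEquiv_apply,
    changeForm_algebraMap, changeForm_ι] at h2
  have : ExteriorAlgebra.ι R u = algebraMap R _ (-a) := by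
    rw [map_neg]; linear_combination (norm := abel) h2
  rw [ExteriorAlgebra.ι_eq_algebraMap_iff] at this
  exact ⟨neg_eq_zero.mp this.2, this.1⟩

lemma aux_coeffs {n : ℕ} (Q : QuadraticForm ℚ (Fin n → ℚ))
    (hQ : ∀ w : Fin n → ℚ, Q w = -(∑ j, (w j) ^ 2))
    (c : ℚ) (v : Fin n → ℚ) (hv : v ≠ 0)
    (hα : IsIntegral ℤ (algebraMap ℚ (CliffordAlgebra Q) c + CliffordAlgebra.ι Q v)) :
    (∃ k : ℤ, (k : ℚ) = 2 * c) ∧ ∃ l : ℤ, (l : ℚ) = c ^ 2 + ∑ j, (v j) ^ 2 := by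
  haveI : Invertible (2 : ℚ) := invertibleOfNonzero (by norm_num)
  set α : CliffordAlgebra Q := algebraMap ℚ (CliffordAlgebra Q) c + CliffordAlgebra.ι Q v with hαdef
  set d : ℚ := c ^ 2 + ∑ j, (v j) ^ 2 with hd
  set f : ℚ[X] := X ^ 2 - C (2 * c) * X + C d with hf
  have hrw : f = X ^ 2 + (C d - C (2 * c) * X) := by rw [hf]; ring
  have hlow : (C d - C (2 * c) * X).degree < (X ^ 2 : ℚ[X]).degree := by
    rw [degree_X_pow]
    refine lt_of_le_of_lt (degree_sub_le _ _) ?_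
    refine max_lt (lt_of_le_of_lt degree_C_le ?_) (lt_of_le_of_lt (degree_C_mul_X_le _) ?_)
    · norm_num
    · norm_num
  have fmonic : f.Monic := by
    rw [hrw]
    exact (monic_X_pow 2).add_of_left hlow
  have hfdeg : f.degree = 2 := by
    rw [hrw, degree_add_eq_left_of_degree_lt hlow, degree_X_pow]; rfl
  have hQv : Q v = -(∑ j, (v j) ^ 2) := hQ v
  have hsq : α ^ 2 = algebraMap ℚ _ (c ^ 2 + Q v) + algebraMap ℚ _ (2 * c) * CliffordAlgebra.ι Q v := by
    rw [hαdef, pow_two, add_mul, mul_add, mul_add, CliffordAlgebra.ι_sq_scalar,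
      ← Algebra.commutes c (CliffordAlgebra.ι Q v), ← map_mul, map_add,
      show (2 : ℚ) * c = c + c from by ring, map_add, add_mul,
      show c * c = c ^ 2 from (sq c).symm]
    abel
  have hroot : aeval α f = 0 := by
    rw [hf]
    simp only [map_add, map_sub, map_pow, map_mul, aeval_X, aeval_C]
    rw [hsq, hαdef, hQv]
    have e1 : algebraMap ℚ (CliffordAlgebra Q) (2 * c) *
        (algebraMap ℚ (CliffordAlgebra Q) c + CliffordAlgebra.ι Q v) =
        algebraMap ℚ (CliffordAlgebra Q) (2 * c * c) +
        algebraMap ℚ (CliffordAlgebra Q) (2 * c) * CliffordAlgebra.ι Q v := by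
      rw [mul_add, ← map_mul]
    rw [← map_mul, e1]
    have e2 : algebraMap ℚ (CliffordAlgebra Q) (c ^ 2 + -(∑ j, (v j) ^ 2)) -
        algebraMap ℚ (CliffordAlgebra Q) (2 * c * c) + algebraMap ℚ (CliffordAlgebra Q) d = 0 := by
      rw [← map_sub, ← map_add, hd, show c ^ 2 + -(∑ j, (v j) ^ 2) - 2 * c * c +
        (c ^ 2 + ∑ j, (v j) ^ 2) = 0 from by ring, map_zero]
    calc algebraMap ℚ (CliffordAlgebra Q) (c ^ 2 + -(∑ j, (v j) ^ 2)) +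
          algebraMap ℚ (CliffordAlgebra Q) (2 * c) * CliffordAlgebra.ι Q v -
          (algebraMap ℚ (CliffordAlgebra Q) (2 * c * c) +
            algebraMap ℚ (CliffordAlgebra Q) (2 * c) * CliffordAlgebra.ι Q v) +
          algebraMap ℚ (CliffordAlgebra Q) d
        = algebraMap ℚ (CliffordAlgebra Q) (c ^ 2 + -(∑ j, (v j) ^ 2)) -
          algebraMap ℚ (CliffordAlgebra Q) (2 * c * c) + algebraMap ℚ (CliffordAlgebra Q) d := by
          abel
      _ = 0 := e2
  -- obtain integral monic polynomial
  obtain ⟨p, pmonic, hp⟩ := hα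
  set g : ℚ[X] := p.map (algebraMap ℤ ℚ) with hg
  have hgroot : aeval α g = 0 := by
    rw [hg, aeval_map_algebraMap]
    exact hp
  -- remainder
  have hrem : aeval α (g %ₘ f) = 0 := by
    have := modByMonic_add_div g f
    have h2 : aeval α (g %ₘ f + f * (g /ₘ f)) = 0 := by rw [this]; exact hgroot
    rw [map_add, map_mul, hroot, zero_mul, add_zero] at h2
    exact h2
  set r : ℚ[X] := g %ₘ f with hr
  have hdeg : r.degree ≤ 1 := by
    have h2 := degree_modByMonic_lt g fmonic
    rw [hfdeg] at h2
    rcases hdr : r.degree with _ | k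
    · exact bot_le
    · rw [hdr] at h2
      have hk : (k : WithBot ℕ) < 2 := h2
      have hk2 : k < 2 := by exact_mod_cast hk
      have hk3 : (k : WithBot ℕ) ≤ 1 := by exact_mod_cast Nat.lt_succ_iff.mp hk2
      exact hk3
  have hrrep : r = C (r.coeff 1) * X + C (r.coeff 0) := eq_X_add_C_of_degree_le_one hdeg
  have haev : aeval α r = algebraMap ℚ (CliffordAlgebra Q) (r.coeff 1 * c + r.coeff 0) +
      CliffordAlgebra.ι Q (r.coeff 1 • v) := by
    conv_lhs => rw [hrrep]
    rw [map_add, map_mul, aeval_C, aeval_C, aeval_X, hαdef, mul_add, ← map_mul, map_smul,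
      Algebra.smul_def, map_add (algebraMap ℚ (CliffordAlgebra Q))]
    abel
  rw [haev] at hrem
  obtain ⟨hc0, hv0⟩ := aux_scalar_add_ι_eq_zero Q _ _ hrem
  have hr1 : r.coeff 1 = 0 := by
    rcases smul_eq_zero.mp hv0 with h | h
    · exact h
    · exact absurd h hv
  have hr0 : r.coeff 0 = 0 := by
    rw [hr1, zero_mul, zero_add] at hc0
    exact hc0
  have hrzero : r = 0 := by rw [hrrep, hr1, hr0]; simp
  have hdvd : f ∣ g := (modByMonic_eq_zero_iff_dvd fmonic).mp hrzero
  obtain ⟨f', hf'⟩ := IsIntegrallyClosed.eq_map_mul_C_of_dvd (K := ℚ) pmonic hdvd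
  rw [fmonic.leadingCoeff, map_one, mul_one] at hf'
  have hcoeff : ∀ i, f.coeff i = ((f'.coeff i : ℤ) : ℚ) := by
    intro i
    rw [← hf', coeff_map, eq_intCast]
  have hc1 : f.coeff 1 = -(2 * c) := by
    rw [hf]
    simp [coeff_X_pow]
  have hc0' : f.coeff 0 = d := by
    rw [hf]
    simp [coeff_X_pow]
  constructor
  · exact ⟨-(f'.coeff 1), by push_cast; rw [← hcoeff 1, hc1]; ring⟩
  · exact ⟨f'.coeff 0, by rw [← hcoeff 0, hc0', hd]⟩


lemma aux_single_sq {n : ℕ} (j : Fin n) : ∑ i, ((Pi.single j 1 : Fin n → ℚ) i) ^ 2 = 1 := by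
  simp [Pi.single_apply]

lemma aux_single_add_sq {n : ℕ} (j : Fin n) (w : Fin n → ℚ) :
    ∑ i, (((Pi.single j 1 : Fin n → ℚ) + w) i) ^ 2 = 1 + 2 * w j + ∑ i, (w i) ^ 2 := by
  have h : ∀ i, (((Pi.single j 1 : Fin n → ℚ) + w) i) ^ 2 =
      ((Pi.single j 1 : Fin n → ℚ) i) ^ 2 + 2 * ((Pi.single j 1 : Fin n → ℚ) i) * w i
        + (w i) ^ 2 := fun i => by simp [Pi.add_apply]; ring
  rw [Finset.sum_congr rfl fun i _ => h i, Finset.sum_add_distrib, Finset.sum_add_distrib]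
  simp [Pi.single_apply, mul_ite, Finset.mul_sum]

lemma aux_conj {n : ℕ} (Q : QuadraticForm ℚ (Fin n → ℚ))
    (hQ : ∀ w : Fin n → ℚ, Q w = -(∑ j, (w j) ^ 2))
    (c : ℚ) (w : Fin n → ℚ) (j : Fin n) :
    algebraMap ℚ (CliffordAlgebra Q) (2 * c) + CliffordAlgebra.ι Q ((2 * w j) • (Pi.single j 1 : Fin n → ℚ)) =
      (algebraMap ℚ (CliffordAlgebra Q) c + CliffordAlgebra.ι Q w) -
        CliffordAlgebra.ι Q (Pi.single j 1) *
          (algebraMap ℚ (CliffordAlgebra Q) c + CliffordAlgebra.ι Q w) *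
          CliffordAlgebra.ι Q (Pi.single j 1) := by
  set A := algebraMap ℚ (CliffordAlgebra Q)
  set e := CliffordAlgebra.ι Q (Pi.single j 1 : Fin n → ℚ) with he
  have hQe : Q (Pi.single j 1) = -1 := by rw [hQ, aux_single_sq]
  have hee : e * e = A (-1) := by rw [he, CliffordAlgebra.ι_sq_scalar, hQe]
  have hpolar : QuadraticMap.polar Q (Pi.single j 1) w = -(2 * w j) := by
    rw [QuadraticMap.polar, hQ (Pi.single j 1 + w), hQ w, hQe, aux_single_add_sq j w]
    ring
  have hswap : e * CliffordAlgebra.ι Q w = A (-(2 * w j)) - CliffordAlgebra.ι Q w * e := by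
    rw [eq_sub_iff_add_eq, he, CliffordAlgebra.ι_mul_ι_add_swap, hpolar]
  have h1 : e * A c * e = A (-c) := by
    rw [← Algebra.commutes c e, mul_assoc, hee, ← map_mul]; ring_nf; rfl
  have h2 : e * CliffordAlgebra.ι Q w * e = A (-(2 * w j)) * e + CliffordAlgebra.ι Q w := by
    rw [hswap, sub_mul, mul_assoc, hee, ← Algebra.commutes (-1 : ℚ) (CliffordAlgebra.ι Q w),
      show A (-1) = -1 from by simp, neg_one_mul, sub_neg_eq_add]
  have hx : e * (A c + CliffordAlgebra.ι Q w) * e =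
      A (-c) + (A (-(2 * w j)) * e + CliffordAlgebra.ι Q w) := by
    rw [mul_add, add_mul, h1, h2]
  rw [hx, map_smul, Algebra.smul_def, map_neg, map_neg,
    show (2 : ℚ) * c = c + c from by ring, map_add, neg_mul]
  abel

theorem order_gives_doubly_even_code {n : ℕ} (Q : QuadraticForm ℚ (Fin n → ℚ))
    (hQ : ∀ w : Fin n → ℚ, Q w = -(∑ j, (w j) ^ 2))
    (𝒪 : Subring (CliffordAlgebra Q))
    (hint : ∀ x ∈ 𝒪, IsIntegral ℤ x)
    (hgen : ∀ j : Fin n, CliffordAlgebra.ι Q (Pi.single j 1) ∈ 𝒪)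
    (c : ℚ) (w : Fin n → ℚ)
    (hmem : algebraMap ℚ (CliffordAlgebra Q) c + CliffordAlgebra.ι Q w ∈ 𝒪) :
    ∃ (m₀ : ℤ) (m : Fin n → ℤ), (m₀ : ℚ) = 2 * c ∧ (∀ j, (m j : ℚ) = 2 * w j) ∧
      (4 : ℤ) ∣ m₀ ^ 2 + ∑ j, (m j) ^ 2 := by
  haveI : Invertible (2 : ℚ) := invertibleOfNonzero (by norm_num)
  by_cases hw : w = 0
  · -- scalar case
    subst hw
    rw [map_zero, add_zero] at hmem
    have hci : IsIntegral ℤ (algebraMap ℚ (CliffordAlgebra Q) c) := hint _ hmem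
    have hic : IsIntegral ℤ c :=
      (isIntegral_algebraMap_iff (RingHom.injective (algebraMap ℚ (CliffordAlgebra Q)))).mp hci
    obtain ⟨k, hk⟩ := IsIntegrallyClosed.isIntegral_iff.mp hic
    refine ⟨2 * k, 0, ?_, ?_, ?_⟩
    · push_cast
      rw [show ((k : ℚ)) = c from hk]
    · intro j; simp
    · refine ⟨k ^ 2, by ring_nf; simp⟩
  · -- nonscalar case
    obtain ⟨⟨k, hk⟩, ⟨l, hl⟩⟩ := aux_coeffs Q hQ c w hw (hint _ hmem)
    have hmj : ∀ j : Fin n, ∃ mj : ℤ, (mj : ℚ) = 2 * w j := by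
      intro j
      by_cases hwj : w j = 0
      · exact ⟨0, by simp [hwj]⟩
      · have hy : algebraMap ℚ (CliffordAlgebra Q) (2 * c) +
            CliffordAlgebra.ι Q ((2 * w j) • (Pi.single j 1 : Fin n → ℚ)) ∈ 𝒪 := by
          rw [aux_conj Q hQ c w j]
          exact Subring.sub_mem _ hmem
            (Subring.mul_mem _ (Subring.mul_mem _ (hgen j) hmem) (hgen j))
        have hvne : (2 * w j) • (Pi.single j 1 : Fin n → ℚ) ≠ 0 := by
          intro h
          have h2 := congrFun h j
          rw [Pi.smul_apply, Pi.single_eq_same, smul_eq_mul, mul_one, Pi.zero_apply] at h2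
          exact hwj (by linarith)
        obtain ⟨⟨k', hk'⟩, ⟨l', hl'⟩⟩ := aux_coeffs Q hQ (2 * c) _ hvne (hint _ hy)
        have hsum : ∑ i, (((2 * w j) • (Pi.single j 1 : Fin n → ℚ)) i) ^ 2 =
            (2 * w j) ^ 2 := by
          simp [Pi.single_apply, mul_pow]
        rw [hsum] at hl'
        -- (2 * w j)^2 = l' - k^2
        have hsq : (2 * w j) ^ 2 = ((l' - k ^ 2 : ℤ) : ℚ) := by
          push_cast
          rw [hl', hk]
          ring
        have hint2 : IsIntegral ℤ (2 * w j) := by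
          refine ⟨X ^ 2 - C (l' - k ^ 2), ?_, ?_⟩
          · have : (X ^ 2 - C (l' - k ^ 2) : ℤ[X]) = X ^ 2 + (-C (l' - k ^ 2)) := by ring
            rw [this]
            refine (monic_X_pow 2).add_of_left ?_
            rw [degree_X_pow, degree_neg]
            exact lt_of_le_of_lt degree_C_le (by norm_num)
          · simp only [eval₂_sub, eval₂_pow, eval₂_X, eval₂_C]
            rw [show (algebraMap ℤ ℚ) (l' - k ^ 2) = ((l' - k ^ 2 : ℤ) : ℚ) from rfl, ← hsq]
            ring
        obtain ⟨mj, hmj⟩ := IsIntegrallyClosed.isIntegral_iff.mp hint2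
        exact ⟨mj, hmj⟩
    choose m hm using hmj
    refine ⟨k, m, hk, hm, ?_⟩
    have hcast : ((k ^ 2 + ∑ j, (m j) ^ 2 : ℤ) : ℚ) = ((4 * l : ℤ) : ℚ) := by
      push_cast
      rw [hk, hl, Finset.sum_congr rfl fun j _ => by rw [hm j]]
      have hs : ∑ j, (2 * w j) ^ 2 = 4 * ∑ j, (w j) ^ 2 := by
        rw [Finset.mul_sum]
        exact Finset.sum_congr rfl fun j _ => by ring
      rw [hs]
      ring
    have : k ^ 2 + ∑ j, (m j) ^ 2 = 4 * l := Int.cast_injective hcast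
    exact ⟨l, this⟩
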